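/- arXiv:2107.02042 — 3 statements merged into one kernel-verified Lean document; each statement's English description precedes it below -/
import Mathlib

section
/- Let 0 < α ≤ 1, c > 0 and let s be a nonzero real number. Then for every t > 0 the modulus of exp(c·(−i·s)^(α+1)·t) equals exp(−c·|s|^(α+1)·sin(πα/2)·t), and this quantity tends to 0 as t → +∞. -/
open Real Complex Filter

lemma my_re_cpow (α s : ℝ) (hs : s ≠ 0) :
    ((-(Complex.I * (s : ℂ))) ^ ((α : ℂ) + 1)).re
      = -(|s| ^ (α + 1) * Real.sin (Real.pi * α / 2)) := by
  set z : ℂ := -(Complex.I * (s : ℂ)) with hz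
  have hzne : z ≠ 0 := by
    simp [hz, Complex.ext_iff, hs]
  have habs : ‖z‖ = |s| := by
    simp [hz, Complex.norm_def, Complex.normSq_apply, abs_neg]
  have harg : Complex.arg z = Real.pi / 2 ∨ Complex.arg z = -(Real.pi / 2) := by
    rcases hs.lt_or_gt with h | h
    · left
      have : z = ((-s : ℝ) : ℂ) * Complex.I := by push_cast [hz]; ring
      rw [this, Complex.arg_real_mul _ (by linarith), Complex.arg_I]
    · right
      have : z = ((s : ℝ) : ℂ) * (-Complex.I) := by push_cast [hz]; ring
      rw [this, Complex.arg_real_mul _ h, Complex.arg_neg_I]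
  have hw : ((α : ℂ) + 1) = ((α + 1 : ℝ) : ℂ) := by push_cast; ring
  rw [Complex.cpow_def_of_ne_zero hzne, Complex.exp_re]
  have hre : (Complex.log z * ((α : ℂ) + 1)).re = Real.log |s| * (α + 1) := by
    rw [hw]
    simp [Complex.mul_re, Complex.log_re, habs]
  have him : (Complex.log z * ((α : ℂ) + 1)).im = Complex.arg z * (α + 1) := by
    rw [hw]
    simp [Complex.mul_im, Complex.log_im]
  rw [hre, him]
  have hexp : Real.exp (Real.log |s| * (α + 1)) = |s| ^ (α + 1) := by
    rw [Real.rpow_def_of_pos (abs_pos.mpr hs)]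
  have hcos : Real.cos (Complex.arg z * (α + 1)) = -Real.sin (Real.pi * α / 2) := by
    have key : Real.cos (Real.pi / 2 * (α + 1)) = -Real.sin (Real.pi * α / 2) := by
      have : Real.pi / 2 * (α + 1) = Real.pi / 2 + Real.pi * α / 2 := by ring
      rw [this, Real.cos_add, Real.cos_pi_div_two, Real.sin_pi_div_two]
      ring
    rcases harg with h | h <;> rw [h]
    · exact key
    · rw [show -(Real.pi / 2) * (α + 1) = -(Real.pi / 2 * (α + 1)) by ring,
        Real.cos_neg]; exact key
  rw [hexp, hcos]
  ring

/-- Equations (eq20)–(eq21*) of the paper: for `0 < α ≤ 1`, `c > 0` and `s ≠ 0` real,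
the modulus of the Fourier-side Green function `exp(c·(−i·s)^(α+1)·t)` equals
`exp(−c·|s|^(α+1)·sin(πα/2)·t)` for every `t > 0`, and it tends to `0` as `t → +∞`. -/
theorem green_function_abs_tendsto_zero (α c s : ℝ) (hα0 : 0 < α) (hα1 : α ≤ 1)
    (hc : 0 < c) (hs : s ≠ 0) :
    (∀ t : ℝ, 0 < t →
      ‖Complex.exp ((c : ℂ) * (-(Complex.I * (s : ℂ))) ^ ((α : ℂ) + 1) * (t : ℂ))‖ =
        Real.exp (-(c * |s| ^ (α + 1) * Real.sin (Real.pi * α / 2) * t))) ∧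
    Filter.Tendsto
      (fun t : ℝ =>
        ‖Complex.exp ((c : ℂ) * (-(Complex.I * (s : ℂ))) ^ ((α : ℂ) + 1) * (t : ℂ))‖)
      Filter.atTop (nhds 0) := by
  have key : ∀ t : ℝ,
      ‖Complex.exp ((c : ℂ) * (-(Complex.I * (s : ℂ))) ^ ((α : ℂ) + 1) * (t : ℂ))‖ =
        Real.exp (-(c * |s| ^ (α + 1) * Real.sin (Real.pi * α / 2) * t)) := by
    intro t
    rw [Complex.norm_exp]
    congr 1
    have : ((c : ℂ) * (-(Complex.I * (s : ℂ))) ^ ((α : ℂ) + 1) * (t : ℂ)).re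
        = c * ((-(Complex.I * (s : ℂ))) ^ ((α : ℂ) + 1)).re * t := by
      simp [Complex.mul_re]
    rw [this, my_re_cpow α s hs]
    ring
  constructor
  · intro t _; exact key t
  · have hk : 0 < c * |s| ^ (α + 1) * Real.sin (Real.pi * α / 2) := by
      have hsin : 0 < Real.sin (Real.pi * α / 2) := by
        apply Real.sin_pos_of_pos_of_lt_pi
        · positivity
        · nlinarith [Real.pi_pos]
      have : (0:ℝ) < |s| ^ (α + 1) := Real.rpow_pos_of_pos (abs_pos.mpr hs) _
      positivity
    have h1 : Filter.Tendsto (fun t : ℝ =>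
        Real.exp (-(c * |s| ^ (α + 1) * Real.sin (Real.pi * α / 2) * t)))
        Filter.atTop (nhds 0) := by
      apply Real.tendsto_exp_atBot.comp
      apply Filter.tendsto_neg_atTop_atBot.comp
      exact Filter.Tendsto.const_mul_atTop hk tendsto_id
    exact h1.congr fun t => (key t).symm
end

section
/- Let 0 < α ≤ 1, c > 0, and let e₀ : ℝ → ℂ be Lebesgue integrable. For x ∈ [0,1] and t > 0 define e(x,t) = (1/(2π))·∫_ℝ e^{−isx}·exp(c·(−i·s)^(α+1)·t)·e₀(s) ds. Then sup_{x∈[0,1]} |e(x,t)| → 0 as t → +∞. -/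
open Real Complex MeasureTheory Filter

lemma re_aux (α : ℝ) (hα0 : 0 < α) (s : ℝ) :
    ((-(Complex.I * (s : ℂ))) ^ ((α : ℂ) + 1)).re
      = -(|s| ^ (α + 1)) * Real.sin (Real.pi * α / 2) := by
  have hexp : ((α : ℂ) + 1) ≠ 0 := by
    intro h
    have : (α : ℝ) + 1 = 0 := by exact_mod_cast congrArg Complex.re h
    linarith
  rcases lt_trichotomy s 0 with hs | rfl | hs
  · -- s < 0 : -(I*s) = (-s) * I, arg = π/2
    have hz : -(Complex.I * (s : ℂ)) = ((-s : ℝ) : ℂ) * Complex.I := by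
      push_cast
      ring
    have harg : (-(Complex.I * (s : ℂ))).arg = π / 2 := by
      rw [hz, Complex.arg_real_mul _ (by linarith : (0:ℝ) < -s), Complex.arg_I]
    have habs : ‖(-(Complex.I * (s : ℂ)))‖ = |s| := by
      simp [norm_neg, norm_mul, Complex.norm_real]
    have hz0 : -(Complex.I * (s : ℂ)) ≠ 0 := by
      simp [Complex.ext_iff, hs.ne]
    rw [Complex.cpow_def_of_ne_zero hz0, Complex.exp_re]
    have hlog_re : (Complex.log (-(Complex.I * (s : ℂ)))).re = Real.log |s| := by
      rw [Complex.log_re, habs]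
    have hlog_im : (Complex.log (-(Complex.I * (s : ℂ)))).im = π / 2 := by
      rw [Complex.log_im, harg]
    have hre : (Complex.log (-(Complex.I * (s : ℂ))) * ((α : ℂ) + 1)).re
        = Real.log |s| * (α + 1) := by
      simp [Complex.mul_re, Complex.add_re, Complex.add_im, hlog_re, hlog_im]
    have him : (Complex.log (-(Complex.I * (s : ℂ))) * ((α : ℂ) + 1)).im
        = (π / 2) * (α + 1) := by
      simp [Complex.mul_im, hlog_re, hlog_im]
    rw [hre, him]
    have habs_pos : (0:ℝ) < |s| := abs_pos.mpr hs.ne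
    have h1 : Real.exp (Real.log |s| * (α + 1)) = |s| ^ (α + 1) := by
      rw [Real.rpow_def_of_pos habs_pos]
    have h2 : Real.cos ((π / 2) * (α + 1)) = -Real.sin (π * α / 2) := by
      have : (π / 2) * (α + 1) = π * α / 2 + π / 2 := by ring
      rw [this, Real.cos_add_pi_div_two]
    rw [h1, h2]; ring
  · -- s = 0
    have : -(Complex.I * ((0:ℝ) : ℂ)) = 0 := by simp
    rw [this, Complex.zero_cpow hexp]
    simp [Real.zero_rpow (by linarith : α + 1 ≠ 0)]
  · -- s > 0 : -(I*s) = s * (-I), arg = -(π/2)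
    have hz : -(Complex.I * (s : ℂ)) = ((s : ℝ) : ℂ) * (-Complex.I) := by
      ring
    have harg : (-(Complex.I * (s : ℂ))).arg = -(π / 2) := by
      rw [hz, Complex.arg_real_mul _ hs, Complex.arg_neg_I]
    have habs : ‖(-(Complex.I * (s : ℂ)))‖ = |s| := by
      simp [norm_neg, norm_mul, Complex.norm_real]
    have hz0 : -(Complex.I * (s : ℂ)) ≠ 0 := by
      simp [Complex.ext_iff, hs.ne']
    rw [Complex.cpow_def_of_ne_zero hz0, Complex.exp_re]
    have hlog_re : (Complex.log (-(Complex.I * (s : ℂ)))).re = Real.log |s| := by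
      rw [Complex.log_re, habs]
    have hlog_im : (Complex.log (-(Complex.I * (s : ℂ)))).im = -(π / 2) := by
      rw [Complex.log_im, harg]
    have hre : (Complex.log (-(Complex.I * (s : ℂ))) * ((α : ℂ) + 1)).re
        = Real.log |s| * (α + 1) := by
      simp [Complex.mul_re, hlog_re, hlog_im]
    have him : (Complex.log (-(Complex.I * (s : ℂ))) * ((α : ℂ) + 1)).im
        = -((π / 2) * (α + 1)) := by
      simp [Complex.mul_im, hlog_re, hlog_im]
    rw [hre, him]
    have habs_pos : (0:ℝ) < |s| := abs_pos.mpr hs.ne'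
    have h1 : Real.exp (Real.log |s| * (α + 1)) = |s| ^ (α + 1) := by
      rw [Real.rpow_def_of_pos habs_pos]
    have h2 : Real.cos (-((π / 2) * (α + 1))) = -Real.sin (π * α / 2) := by
      rw [Real.cos_neg]
      have : (π / 2) * (α + 1) = π * α / 2 + π / 2 := by ring
      rw [this, Real.cos_add_pi_div_two]
    rw [h1, h2]; ring

/-- The paper's Theorem 6.5: the backstepping tracking-error system is asymptotically stable
in `L∞`. If `e₀` is integrable and
`e(x,t) = (1/(2π))·∫_ℝ e^{−isx}·exp(c·(−i·s)^(α+1)·t)·e₀(s) ds`,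
then `sup_{x∈[0,1]} |e(x,t)| → 0` as `t → +∞`. -/
theorem tracking_error_asymptotically_stable (α c : ℝ) (hα0 : 0 < α) (hα1 : α ≤ 1)
    (hc : 0 < c) (e0 : ℝ → ℂ) (he0 : MeasureTheory.Integrable e0) :
    Filter.Tendsto
      (fun t : ℝ => ⨆ x ∈ Set.Icc (0 : ℝ) 1,
        ‖(1 / (2 * (Real.pi : ℂ))) *
          ∫ s : ℝ, Complex.exp (-(Complex.I * (s : ℂ) * (x : ℂ))) *
            Complex.exp ((c : ℂ) * (-(Complex.I * (s : ℂ))) ^ ((α : ℂ) + 1) * (t : ℂ)) * e0 s‖)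
      Filter.atTop (nhds 0) := by
  have re_aux : ∀ s : ℝ, ((-(Complex.I * (s : ℂ))) ^ ((α : ℂ) + 1)).re
      = -(|s| ^ (α + 1)) * Real.sin (Real.pi * α / 2) := fun s => re_aux α hα0 s
  set S : ℝ := Real.sin (Real.pi * α / 2) with hS_def
  have hS : 0 < S := by
    apply Real.sin_pos_of_pos_of_lt_pi
    · positivity
    · nlinarith [Real.pi_pos]
  set F : ℝ → ℝ → ℝ := fun t s => Real.exp (-(c * t * (|s| ^ (α + 1) * S))) * ‖e0 s‖ with hF_def
  -- key norm computation
  have hnorm : ∀ t s : ℝ,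
      ‖Complex.exp ((c : ℂ) * (-(Complex.I * (s : ℂ))) ^ ((α : ℂ) + 1) * (t : ℂ))‖
        = Real.exp (-(c * t * (|s| ^ (α + 1) * S))) := by
    intro t s
    rw [Complex.norm_exp]
    congr 1
    have : ((c : ℂ) * (-(Complex.I * (s : ℂ))) ^ ((α : ℂ) + 1) * (t : ℂ)).re
        = c * ((-(Complex.I * (s : ℂ))) ^ ((α : ℂ) + 1)).re * t := by
      simp [Complex.mul_re, Complex.mul_im, Complex.ofReal_re, Complex.ofReal_im]
    rw [this, re_aux s]; ring
  -- integral tendsto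
  have hint : Tendsto (fun t => ∫ s : ℝ, F t s) atTop (nhds 0) := by
    have h0 : (0 : ℝ) = ∫ s : ℝ, (0 : ℝ) := by simp
    rw [h0]
    apply MeasureTheory.tendsto_integral_filter_of_dominated_convergence
      (bound := fun s => ‖e0 s‖)
    · filter_upwards with t
      apply AEStronglyMeasurable.mul _ he0.norm.aestronglyMeasurable
      apply Continuous.aestronglyMeasurable
      apply Real.continuous_exp.comp
      apply Continuous.neg
      exact (continuous_const.mul ((_root_.continuous_abs.rpow_const
        (fun x => Or.inr (by positivity))).mul continuous_const))
    · filter_upwards [eventually_ge_atTop (0:ℝ)] with t ht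
      filter_upwards with s
      have h1 : Real.exp (-(c * t * (|s| ^ (α + 1) * S))) ≤ 1 := by
        apply Real.exp_le_one_iff.mpr
        have h3 : 0 ≤ |s| ^ (α + 1) := Real.rpow_nonneg (abs_nonneg s) _
        have h4 : 0 ≤ c * t := mul_nonneg hc.le ht
        have h5 : 0 ≤ |s| ^ (α + 1) * S := mul_nonneg h3 hS.le
        nlinarith [mul_nonneg h4 h5]
      have h2 : (0:ℝ) ≤ Real.exp (-(c * t * (|s| ^ (α + 1) * S))) := Real.exp_nonneg _
      have hFnn : 0 ≤ F t s := mul_nonneg h2 (norm_nonneg _)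
      rw [Real.norm_eq_abs, _root_.abs_of_nonneg hFnn]
      calc F t s ≤ 1 * ‖e0 s‖ := by
            apply mul_le_mul_of_nonneg_right h1 (norm_nonneg _)
        _ = ‖e0 s‖ := one_mul _
    · exact he0.norm
    · have hae : ∀ᵐ s : ℝ, s ≠ 0 := by
        rw [ae_iff]
        simp only [not_not]
        have : {a : ℝ | a = 0} = {(0:ℝ)} := by ext x; simp
        rw [this]
        exact Real.volume_singleton
      filter_upwards [hae] with s hs
      have hpos : 0 < |s| ^ (α + 1) := Real.rpow_pos_of_pos (abs_pos.mpr hs) _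
      have hk : 0 < c * (|s| ^ (α + 1) * S) := by positivity
      have htend : Tendsto (fun t : ℝ => -(c * t * (|s| ^ (α + 1) * S))) atTop atBot := by
        have : (fun t : ℝ => -(c * t * (|s| ^ (α + 1) * S)))
            = fun t : ℝ => (-(c * (|s| ^ (α + 1) * S))) * t := by funext t; ring
        rw [this]
        exact tendsto_id.const_mul_atTop_of_neg (by linarith)
      have := (Real.tendsto_exp_atBot.comp htend).mul_const ‖e0 s‖
      rw [zero_mul] at this
      exact this
  -- upper bound on sup
  have hub : ∀ t : ℝ,
      (⨆ x ∈ Set.Icc (0 : ℝ) 1,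
        ‖(1 / (2 * (Real.pi : ℂ))) *
          ∫ s : ℝ, Complex.exp (-(Complex.I * (s : ℂ) * (x : ℂ))) *
            Complex.exp ((c : ℂ) * (-(Complex.I * (s : ℂ))) ^ ((α : ℂ) + 1) * (t : ℂ)) * e0 s‖)
        ≤ (1 / (2 * Real.pi)) * ∫ s : ℝ, F t s := by
    intro t
    have hg0 : 0 ≤ (1 / (2 * Real.pi)) * ∫ s : ℝ, F t s := by
      apply mul_nonneg (by positivity)
      apply integral_nonneg
      intro s
      exact mul_nonneg (Real.exp_nonneg _) (norm_nonneg _)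
    apply Real.iSup_le _ hg0
    intro x
    apply Real.iSup_le _ hg0
    intro _
    rw [norm_mul]
    have habs_c : ‖(1 / (2 * (Real.pi : ℂ)))‖ = 1 / (2 * Real.pi) := by
      rw [norm_div, norm_one, norm_mul, Complex.norm_two, Complex.norm_real, Real.norm_eq_abs,
        abs_of_pos Real.pi_pos]
    rw [habs_c]
    apply mul_le_mul_of_nonneg_left _ (by positivity)
    calc ‖∫ s : ℝ, Complex.exp (-(Complex.I * (s : ℂ) * (x : ℂ))) *
            Complex.exp ((c : ℂ) * (-(Complex.I * (s : ℂ))) ^ ((α : ℂ) + 1) * (t : ℂ)) * e0 s‖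
        ≤ ∫ s : ℝ, ‖Complex.exp (-(Complex.I * (s : ℂ) * (x : ℂ))) *
            Complex.exp ((c : ℂ) * (-(Complex.I * (s : ℂ))) ^ ((α : ℂ) + 1) * (t : ℂ)) * e0 s‖ :=
          norm_integral_le_integral_norm _
      _ = ∫ s : ℝ, F t s := by
          congr 1
          funext s
          rw [norm_mul, norm_mul, hnorm t s]
          have h1 : ‖Complex.exp (-(Complex.I * (s : ℂ) * (x : ℂ)))‖ = 1 := by
            rw [Complex.norm_exp]
            have : (-(Complex.I * (s : ℂ) * (x : ℂ))).re = 0 := by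
              simp [Complex.mul_re, Complex.mul_im]
            rw [this, Real.exp_zero]
          rw [h1, one_mul]
  -- lower bound
  have hlb : ∀ t : ℝ, 0 ≤
      (⨆ x ∈ Set.Icc (0 : ℝ) 1,
        ‖(1 / (2 * (Real.pi : ℂ))) *
          ∫ s : ℝ, Complex.exp (-(Complex.I * (s : ℂ) * (x : ℂ))) *
            Complex.exp ((c : ℂ) * (-(Complex.I * (s : ℂ))) ^ ((α : ℂ) + 1) * (t : ℂ)) * e0 s‖) := by
    intro t
    exact Real.iSup_nonneg fun x => Real.iSup_nonneg fun _ => norm_nonneg _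
  have hgt : Tendsto (fun t => (1 / (2 * Real.pi)) * ∫ s : ℝ, F t s) atTop (nhds 0) := by
    have := hint.const_mul (1 / (2 * Real.pi))
    rwa [mul_zero] at this
  exact squeeze_zero hlb hub hgt
end

section
/- (Generalized Leibniz rule for the Caputo derivative of a parameter-dependent integral.) Let 0 < α < 1, T > 0, and let K : ℝ × ℝ → ℝ be such that K(s,τ) and its partial derivative ∂_s K(s,τ) are continuous on the triangle {(s,τ) : 0 ≤ τ ≤ s ≤ T}. Then for every t ∈ (0,T], (1/Γ(1−α))·∫₀^t (t−s)^{−α}·(d/ds ∫₀^s K(s,τ) dτ) ds = ∫₀^t [(1/Γ(1−α))·∫_τ^t (t−s)^{−α}·∂_s K(s,τ) ds] dτ + (1/Γ(1−α))·∫₀^t (t−s)^{−α}·K(s,s) ds. -/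
open Real intervalIntegral

open MeasureTheory Set

lemma tri_isCompact (t : ℝ) : IsCompact {p : ℝ × ℝ | 0 ≤ p.2 ∧ p.2 ≤ p.1 ∧ p.1 ≤ t} := by
  apply IsCompact.of_isClosed_subset (isCompact_Icc (a := ((0:ℝ),(0:ℝ))) (b := (t,t)))
  · exact ((isClosed_le continuous_const continuous_snd).inter
      ((isClosed_le continuous_snd continuous_fst).inter
        (isClosed_le continuous_fst continuous_const)))
  · rintro ⟨s, τ⟩ ⟨h1, h2, h3⟩
    exact ⟨⟨le_trans h1 h2, h1⟩, ⟨h3, le_trans h2 h3⟩⟩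

lemma tri_measurableSet (t : ℝ) :
    MeasurableSet {p : ℝ × ℝ | 0 ≤ p.2 ∧ p.2 ≤ p.1 ∧ p.1 ≤ t} :=
  (measurableSet_le measurable_const measurable_snd).inter
    ((measurableSet_le measurable_snd measurable_fst).inter
      (measurableSet_le measurable_fst measurable_const))

/-- Fubini for a triangle. -/
lemma fubini_tri (g : ℝ → ℝ → ℝ) (t : ℝ) (ht : 0 ≤ t)
    (hint : IntegrableOn (fun p : ℝ × ℝ => g p.1 p.2)
      {p : ℝ × ℝ | 0 ≤ p.2 ∧ p.2 ≤ p.1 ∧ p.1 ≤ t} (volume.prod volume)) :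
    (∫ s in (0:ℝ)..t, ∫ τ in (0:ℝ)..s, g s τ) = ∫ τ in (0:ℝ)..t, ∫ s in τ..t, g s τ := by
  set Tri : Set (ℝ × ℝ) := {p : ℝ × ℝ | 0 ≤ p.2 ∧ p.2 ≤ p.1 ∧ p.1 ≤ t} with hTri
  set F : ℝ × ℝ → ℝ := Tri.indicator (fun p => g p.1 p.2) with hF
  have hFint : Integrable F (volume.prod volume) :=
    (integrable_indicator_iff (tri_measurableSet t)).2 hint
  have swap := MeasureTheory.integral_integral_swap (f := fun s τ => F (s, τ)) hFint
  have h1 : ∀ s : ℝ, (∫ τ, F (s, τ)) =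
      (Set.Icc (0:ℝ) t).indicator (fun s => ∫ τ in (0:ℝ)..s, g s τ) s := by
    intro s
    by_cases hs : s ∈ Set.Icc (0:ℝ) t
    · rw [Set.indicator_of_mem hs]
      have hfs : (fun τ => F (s, τ)) = (Set.Icc (0:ℝ) s).indicator (fun τ => g s τ) := by
        funext τ
        by_cases hτ : τ ∈ Set.Icc (0:ℝ) s
        · rw [Set.indicator_of_mem hτ, hF, Set.indicator_of_mem (show (s,τ) ∈ Tri from ⟨hτ.1, hτ.2, hs.2⟩)]
        · rw [Set.indicator_of_notMem hτ, hF,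
            Set.indicator_of_notMem (fun h => hτ ⟨h.1, h.2.1⟩)]
      rw [hfs, MeasureTheory.integral_indicator measurableSet_Icc,
        MeasureTheory.integral_Icc_eq_integral_Ioc, ← intervalIntegral.integral_of_le hs.1]
    · rw [Set.indicator_of_notMem hs]
      have hfs : (fun τ => F (s, τ)) = fun _ => (0:ℝ) := by
        funext τ
        refine Set.indicator_of_notMem (fun h => hs ⟨le_trans h.1 h.2.1, h.2.2⟩) _
      rw [hfs]; simp
  have h2 : ∀ τ : ℝ, (∫ s, F (s, τ)) =
      (Set.Icc (0:ℝ) t).indicator (fun τ => ∫ s in τ..t, g s τ) τ := by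
    intro τ
    by_cases hτ : τ ∈ Set.Icc (0:ℝ) t
    · rw [Set.indicator_of_mem hτ]
      have hfs : (fun s => F (s, τ)) = (Set.Icc τ t).indicator (fun s => g s τ) := by
        funext s
        by_cases hsm : s ∈ Set.Icc τ t
        · rw [Set.indicator_of_mem hsm, hF, Set.indicator_of_mem (show (s,τ) ∈ Tri from ⟨hτ.1, hsm.1, hsm.2⟩)]
        · rw [Set.indicator_of_notMem hsm, hF,
            Set.indicator_of_notMem (fun h => hsm ⟨h.2.1, h.2.2⟩)]
      rw [hfs, MeasureTheory.integral_indicator measurableSet_Icc,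
        MeasureTheory.integral_Icc_eq_integral_Ioc, ← intervalIntegral.integral_of_le hτ.2]
    · rw [Set.indicator_of_notMem hτ]
      have hfs : (fun s => F (s, τ)) = fun _ => (0:ℝ) := by
        funext s
        refine Set.indicator_of_notMem (fun h => hτ ⟨h.1, le_trans h.2.1 h.2.2⟩) _
      rw [hfs]; simp
  calc (∫ s in (0:ℝ)..t, ∫ τ in (0:ℝ)..s, g s τ)
      = ∫ s, ∫ τ, F (s, τ) := by
        rw [intervalIntegral.integral_of_le ht, ← MeasureTheory.integral_Icc_eq_integral_Ioc,
          ← MeasureTheory.integral_indicator measurableSet_Icc]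
        exact integral_congr_ae (μ := volume) (Filter.Eventually.of_forall fun s => (h1 s).symm)
    _ = ∫ τ, ∫ s, F (s, τ) := swap
    _ = ∫ τ in (0:ℝ)..t, ∫ s in τ..t, g s τ := by
        rw [intervalIntegral.integral_of_le ht, ← MeasureTheory.integral_Icc_eq_integral_Ioc,
          ← MeasureTheory.integral_indicator measurableSet_Icc]
        exact integral_congr_ae (μ := volume) (Filter.Eventually.of_forall fun τ => h2 τ)

lemma weighted_integrableOn (α t : ℝ) (hα1 : α < 1) (ht : 0 < t) (K' : ℝ → ℝ → ℝ)
    (hK' : Continuous fun p : ℝ × ℝ => K' p.1 p.2) :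
    IntegrableOn (fun p : ℝ × ℝ => (t - p.1) ^ (-α) * K' p.1 p.2)
      {p : ℝ × ℝ | 0 ≤ p.2 ∧ p.2 ≤ p.1 ∧ p.1 ≤ t} (volume.prod volume) := by
  obtain ⟨M, hM⟩ := IsCompact.exists_bound_of_continuousOn (tri_isCompact t) hK'.continuousOn
  have hM0 : (0:ℝ) ≤ M := le_trans (norm_nonneg _)
    (hM ((0:ℝ),(0:ℝ)) ⟨le_rfl, le_rfl, ht.le⟩)
  have hWint : IntervalIntegrable (fun s : ℝ => (t - s) ^ (-α)) volume 0 t := by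
    have h0 : IntervalIntegrable (fun x : ℝ => x ^ (-α)) volume t 0 :=
      intervalIntegrable_rpow' (by linarith)
    simpa using h0.comp_sub_left t
  rw [← integrable_indicator_iff (tri_measurableSet t)]
  set F : ℝ × ℝ → ℝ :=
    ({p : ℝ × ℝ | 0 ≤ p.2 ∧ p.2 ≤ p.1 ∧ p.1 ≤ t}).indicator
      (fun p => (t - p.1) ^ (-α) * K' p.1 p.2) with hFdef
  have hslice : ∀ x : ℝ, x ≤ t →
      (fun y => F (x, y)) = (Set.Icc (0:ℝ) x).indicator (fun y => (t - x) ^ (-α) * K' x y) := by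
    intro x hx; funext y
    by_cases hy : y ∈ Set.Icc (0:ℝ) x
    · rw [Set.indicator_of_mem hy, hFdef, Set.indicator_of_mem
        (show ((x,y) : ℝ × ℝ) ∈ {p : ℝ × ℝ | 0 ≤ p.2 ∧ p.2 ≤ p.1 ∧ p.1 ≤ t} from
          ⟨hy.1, hy.2, hx⟩)]
    · rw [Set.indicator_of_notMem hy, hFdef,
        Set.indicator_of_notMem (fun h => hy ⟨h.1, h.2.1⟩)]
  have hFm : AEStronglyMeasurable F (volume.prod volume) := by
    have hFsplit : F = fun p : ℝ × ℝ => ((t - p.1) ^ (-α)) *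
        ({p : ℝ × ℝ | 0 ≤ p.2 ∧ p.2 ≤ p.1 ∧ p.1 ≤ t}).indicator
          (fun p => K' p.1 p.2) p := by
      funext p
      by_cases hp : p ∈ {p : ℝ × ℝ | 0 ≤ p.2 ∧ p.2 ≤ p.1 ∧ p.1 ≤ t}
      · rw [hFdef, Set.indicator_of_mem hp, Set.indicator_of_mem hp]
      · rw [hFdef, Set.indicator_of_notMem hp, Set.indicator_of_notMem hp, mul_zero]
    rw [hFsplit]
    refine AEStronglyMeasurable.mul ?_ ?_
    · exact (show Measurable fun p : ℝ × ℝ => (t - p.1) ^ (-α) by fun_prop).aestronglyMeasurable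
    · exact (hK'.measurable.indicator (tri_measurableSet t)).aestronglyMeasurable
  rw [integrable_prod_iff hFm]
  constructor
  · refine Filter.Eventually.of_forall fun x => ?_
    by_cases hx : x ≤ t
    · rw [hslice x hx, integrable_indicator_iff measurableSet_Icc]
      exact (continuous_const.mul
        (hK'.comp (continuous_const.prodMk continuous_id))).integrableOn_Icc
    · have hz : (fun y => F (x, y)) = fun _ => (0:ℝ) := by
        funext y
        exact Set.indicator_of_notMem (fun h => hx h.2.2) _
      rw [hz]
      exact integrable_zero _ _ _
  · apply MeasureTheory.Integrable.mono'
      (g := (Set.Ioc (0:ℝ) t).indicator fun x => (t - x) ^ (-α) * (M * t))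
    · exact (integrable_indicator_iff measurableSet_Ioc).2 (hWint.1.mul_const _)
    · exact hFm.norm.integral_prod_right'
    · refine Filter.Eventually.of_forall fun x => ?_
      by_cases hx : x ≤ t
      · have h2 : (∫ y, ‖F (x, y)‖) = ∫ y in Set.Icc (0:ℝ) x, ‖(t - x) ^ (-α) * K' x y‖ := by
          have h1 : (fun y => ‖F (x, y)‖)
              = (Set.Icc (0:ℝ) x).indicator fun y => ‖(t - x) ^ (-α) * K' x y‖ := by
            funext y
            rw [show F (x, y)
                = (Set.Icc (0:ℝ) x).indicator (fun y => (t - x) ^ (-α) * K' x y) y from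
              congrFun (hslice x hx) y, norm_indicator_eq_indicator_norm]
          rw [h1, MeasureTheory.integral_indicator measurableSet_Icc]
        rw [h2]
        have hWx0 : (0:ℝ) ≤ (t - x) ^ (-α) := Real.rpow_nonneg (by linarith) _
        by_cases hx0 : x ∈ Set.Ioc (0:ℝ) t
        · rw [Set.indicator_of_mem hx0]
          have hb : ‖∫ y in Set.Icc (0:ℝ) x, ‖(t - x) ^ (-α) * K' x y‖‖
              ≤ ((t - x) ^ (-α) * M) * (volume (Set.Icc (0:ℝ) x)).toReal := by
            apply MeasureTheory.norm_setIntegral_le_of_norm_le_const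
            · rw [Real.volume_Icc]; exact ENNReal.ofReal_lt_top
            · intro y hy
              rw [norm_norm, norm_mul, Real.norm_of_nonneg hWx0]
              exact mul_le_mul_of_nonneg_left (hM (x, y) ⟨hy.1, hy.2, hx⟩) hWx0
          refine le_trans hb ?_
          rw [Real.volume_Icc, ENNReal.toReal_ofReal (by linarith [hx0.1.le] : (0:ℝ) ≤ x - 0)]
          have : ((t - x) ^ (-α) * M) * (x - 0) ≤ (t - x) ^ (-α) * (M * t) := by
            rw [sub_zero, mul_assoc]
            exact mul_le_mul_of_nonneg_left
              (mul_le_mul_of_nonneg_left hx0.2 hM0) hWx0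
          exact this
        · rw [Set.indicator_of_notMem hx0]
          have hx0' : x ≤ 0 := by
            by_contra hc
            exact hx0 ⟨lt_of_not_ge hc, hx⟩
          have : volume (Set.Icc (0:ℝ) x) = 0 := by
            rw [Real.volume_Icc]
            exact ENNReal.ofReal_eq_zero.2 (by linarith)
          rw [MeasureTheory.Measure.restrict_eq_zero.2 this, MeasureTheory.integral_zero_measure,
            norm_zero]
      · have hz : (fun y => F (x, y)) = fun _ => (0:ℝ) := by
          funext y
          exact Set.indicator_of_notMem (fun h => hx h.2.2) _
        have hx0 : x ∉ Set.Ioc (0:ℝ) t := fun h => hx h.2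
        rw [Set.indicator_of_notMem hx0,
          show (fun y => ‖F (x, y)‖) = fun _ => (0:ℝ) by
            funext y; rw [congrFun hz y, norm_zero],
          MeasureTheory.integral_zero, norm_zero]

lemma caputo_leibniz_smooth (α : ℝ) (hα1 : α < 1)
    (K K' : ℝ → ℝ → ℝ)
    (hK : Continuous fun p : ℝ × ℝ => K p.1 p.2)
    (hK' : Continuous fun p : ℝ × ℝ => K' p.1 p.2)
    (hd : ∀ s τ : ℝ, HasDerivAt (fun u => K u τ) (K' s τ) s)
    (t : ℝ) (ht : 0 < t) :
    (∫ s in (0:ℝ)..t, (t - s) ^ (-α) * deriv (fun s' => ∫ τ in (0:ℝ)..s', K s' τ) s)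
    = (∫ τ in (0:ℝ)..t, ∫ s in τ..t, (t - s) ^ (-α) * K' s τ)
      + ∫ s in (0:ℝ)..t, (t - s) ^ (-α) * K s s := by
  -- continuity facts
  have hdiag : Continuous fun τ : ℝ => K τ τ :=
    hK.comp (continuous_id.prodMk continuous_id)
  have hKslice : ∀ τ : ℝ, Continuous fun r => K' r τ :=
    fun τ => hK'.comp (continuous_id.prodMk continuous_const)
  have hf2cont : Continuous fun r : ℝ => ∫ τ in (0:ℝ)..r, K' r τ := by
    exact intervalIntegral.continuous_parametric_intervalIntegral_of_continuous
      (a₀ := 0) (f := fun r τ => K' r τ) hK' continuous_id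
  -- derivative of the parameter-dependent integral
  have hG : ∀ s : ℝ, 0 < s → HasDerivAt (fun s' => ∫ τ in (0:ℝ)..s', K s' τ)
      (K s s + ∫ τ in (0:ℝ)..s, K' s τ) s := by
    intro s hs
    have hR : HasDerivAt (fun s' => (∫ τ in (0:ℝ)..s', K τ τ)
        + ∫ r in (0:ℝ)..s', (∫ τ in (0:ℝ)..r, K' r τ))
        (K s s + ∫ τ in (0:ℝ)..s, K' s τ) s := by
      apply HasDerivAt.add
      · exact intervalIntegral.integral_hasDerivAt_right
          (hdiag.intervalIntegrable _ _)
          hdiag.stronglyMeasurable.stronglyMeasurableAtFilter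
          hdiag.continuousAt
      · exact intervalIntegral.integral_hasDerivAt_right
          (hf2cont.intervalIntegrable _ _)
          hf2cont.stronglyMeasurable.stronglyMeasurableAtFilter
          hf2cont.continuousAt
    apply hR.congr_of_eventuallyEq
    filter_upwards [Ioi_mem_nhds hs] with s' hs'
    have hs'0 : (0:ℝ) ≤ s' := le_of_lt hs'
    have h1 : Set.EqOn (fun τ => K s' τ)
        (fun τ => K τ τ + ∫ r in τ..s', K' r τ) (Set.uIcc 0 s') := by
      intro τ _
      have hftc := intervalIntegral.integral_eq_sub_of_hasDerivAt
        (f := fun u => K u τ) (f' := fun u => K' u τ)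
        (fun r _ => hd r τ) ((hKslice τ).intervalIntegrable τ s')
      show K s' τ = K τ τ + ∫ r in τ..s', K' r τ
      linarith [hftc]
    calc (∫ τ in (0:ℝ)..s', K s' τ)
        = ∫ τ in (0:ℝ)..s', (K τ τ + ∫ r in τ..s', K' r τ) :=
          intervalIntegral.integral_congr h1
      _ = (∫ τ in (0:ℝ)..s', K τ τ) + ∫ τ in (0:ℝ)..s', (∫ r in τ..s', K' r τ) := by
          apply intervalIntegral.integral_add (hdiag.intervalIntegrable _ _)
          have : Continuous fun τ : ℝ => ∫ r in τ..s', K' r τ := by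
            have c1 : Continuous fun τ : ℝ => ∫ r in (0:ℝ)..s', K' r τ := by
              exact intervalIntegral.continuous_parametric_intervalIntegral_of_continuous
                (a₀ := 0) (f := fun τ r => K' r τ)
                (hK'.comp (continuous_snd.prodMk continuous_fst)) continuous_const
            have c2 : Continuous fun τ : ℝ => ∫ r in (0:ℝ)..τ, K' r τ := by
              exact intervalIntegral.continuous_parametric_intervalIntegral_of_continuous
                (a₀ := 0) (f := fun τ r => K' r τ)
                (hK'.comp (continuous_snd.prodMk continuous_fst)) continuous_id
            have : (fun τ : ℝ => ∫ r in τ..s', K' r τ)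
                = fun τ : ℝ => (∫ r in (0:ℝ)..s', K' r τ) - ∫ r in (0:ℝ)..τ, K' r τ := by
              funext τ
              rw [intervalIntegral.integral_interval_sub_left
                ((hKslice τ).intervalIntegrable _ _) ((hKslice τ).intervalIntegrable _ _)]
            rw [this]; exact c1.sub c2
          exact this.intervalIntegrable _ _
      _ = (∫ τ in (0:ℝ)..s', K τ τ) + ∫ r in (0:ℝ)..s', (∫ τ in (0:ℝ)..r, K' r τ) := by
          congr 1
          exact (fubini_tri K' s' hs'0
            (ContinuousOn.integrableOn_compact (tri_isCompact s') hK'.continuousOn)).symm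
  have hWint : IntervalIntegrable (fun s : ℝ => (t - s) ^ (-α)) volume 0 t := by
    have h0 : IntervalIntegrable (fun x : ℝ => x ^ (-α)) volume t 0 :=
      intervalIntegrable_rpow' (by linarith)
    simpa using h0.comp_sub_left t
  have ibB : IntervalIntegrable (fun s => (t - s) ^ (-α) * K s s) volume 0 t :=
    hWint.mul_continuousOn hdiag.continuousOn
  have ibI2 : IntervalIntegrable
      (fun s => (t - s) ^ (-α) * ∫ τ in (0:ℝ)..s, K' s τ) volume 0 t :=
    hWint.mul_continuousOn hf2cont.continuousOn
  have hne : ∀ᵐ s : ℝ, s ≠ t := by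
    rw [MeasureTheory.ae_iff]
    simp only [ne_eq, not_not, Set.setOf_eq_eq_singleton]
    exact Real.volume_singleton
  have hstep : (∫ s in (0:ℝ)..t, (t - s) ^ (-α) * deriv (fun s' => ∫ τ in (0:ℝ)..s', K s' τ) s)
      = ∫ s in (0:ℝ)..t, ((t - s) ^ (-α) * K s s
          + (t - s) ^ (-α) * ∫ τ in (0:ℝ)..s, K' s τ) := by
    apply intervalIntegral.integral_congr_ae
    filter_upwards [hne] with s hsne hsI
    rw [Set.uIoc_of_le ht.le] at hsI
    have hs0 : 0 < s := hsI.1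
    rw [(hG s hs0).deriv, mul_add]
  rw [hstep, intervalIntegral.integral_add ibB ibI2]
  have hI2 : (∫ s in (0:ℝ)..t, (t - s) ^ (-α) * ∫ τ in (0:ℝ)..s, K' s τ)
      = ∫ τ in (0:ℝ)..t, ∫ s in τ..t, (t - s) ^ (-α) * K' s τ := by
    have h1 : (∫ s in (0:ℝ)..t, (t - s) ^ (-α) * ∫ τ in (0:ℝ)..s, K' s τ)
        = ∫ s in (0:ℝ)..t, ∫ τ in (0:ℝ)..s, (t - s) ^ (-α) * K' s τ := by
      apply intervalIntegral.integral_congr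
      intro s _
      exact (intervalIntegral.integral_const_mul _ _).symm
    rw [h1]
    exact fubini_tri (fun s τ => (t - s) ^ (-α) * K' s τ) t ht.le
      (weighted_integrableOn α t hα1 ht K' hK')
  rw [hI2]
  ring

/-- The paper's Theorem 2.9 (generalized Leibniz rule for the Caputo derivative of a
parameter-dependent integral), with all fractional operators written as explicit integrals:
for `0 < α < 1` and `K`, `∂ₛK` continuous on the triangle `{0 ≤ τ ≤ s ≤ T}`,
`^C D^α_t ∫₀^t K(t,τ)dτ = ∫₀^t (^C_τ D^α_t K)(t,τ)dτ + J^{1−α}_t K(t,t)` for `t ∈ (0,T]`. -/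
theorem caputo_leibniz_rule (α T : ℝ) (hα0 : 0 < α) (hα1 : α < 1) (hT : 0 < T)
    (K K' : ℝ → ℝ → ℝ)
    (hderiv : ∀ s τ : ℝ, 0 ≤ τ → τ ≤ s → s ≤ T → HasDerivAt (fun u => K u τ) (K' s τ) s)
    (hK : ContinuousOn (fun p : ℝ × ℝ => K p.1 p.2)
      {p : ℝ × ℝ | 0 ≤ p.2 ∧ p.2 ≤ p.1 ∧ p.1 ≤ T})
    (hK' : ContinuousOn (fun p : ℝ × ℝ => K' p.1 p.2)
      {p : ℝ × ℝ | 0 ≤ p.2 ∧ p.2 ≤ p.1 ∧ p.1 ≤ T}) :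
    ∀ t ∈ Set.Ioc (0 : ℝ) T,
      (1 / Real.Gamma (1 - α)) * ∫ s in (0:ℝ)..t, (t - s) ^ (-α) *
          deriv (fun s' => ∫ τ in (0:ℝ)..s', K s' τ) s
      = (∫ τ in (0:ℝ)..t,
            (1 / Real.Gamma (1 - α)) * ∫ s in τ..t, (t - s) ^ (-α) * K' s τ)
        + (1 / Real.Gamma (1 - α)) * ∫ s in (0:ℝ)..t, (t - s) ^ (-α) * K s s := by
  intro t ht
  set u' : ℝ → ℝ := fun u => max (min u T) 0 with hu'def
  have hu'c : Continuous u' := (continuous_id.min continuous_const).max continuous_const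
  have hu'mem : ∀ u, 0 ≤ u' u ∧ u' u ≤ T :=
    fun u => ⟨le_max_right _ _, max_le (min_le_right _ _) hT.le⟩
  have hu'eq : ∀ u, 0 ≤ u → u ≤ T → u' u = u := by
    intro u h0 h1
    show max (min u T) 0 = u
    rw [min_eq_left h1, max_eq_left h0]
  set τ' : ℝ → ℝ → ℝ := fun u τ => max (min τ (u' u)) 0 with hτ'def
  set Kt' : ℝ → ℝ → ℝ := fun u τ => K' (u' u) (τ' u τ) with hKt'def
  have hproj : ∀ u τ : ℝ, ((u' u, τ' u τ) : ℝ × ℝ)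
      ∈ {p : ℝ × ℝ | 0 ≤ p.2 ∧ p.2 ≤ p.1 ∧ p.1 ≤ T} := by
    intro u τ
    exact ⟨le_max_right _ _, max_le (min_le_right _ _) (hu'mem u).1, (hu'mem u).2⟩
  have hKt'c : Continuous fun p : ℝ × ℝ => Kt' p.1 p.2 :=
    hK'.comp_continuous (f := fun p : ℝ × ℝ => (u' p.1, τ' p.1 p.2))
      ((hu'c.comp continuous_fst).prodMk
        ((continuous_snd.min (hu'c.comp continuous_fst)).max continuous_const))
      (fun p => hproj p.1 p.2)
  have hKt'eq : ∀ u τ : ℝ, 0 ≤ τ → τ ≤ u → u ≤ T → Kt' u τ = K' u τ := by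
    intro u τ h0 h1 h2
    have huu : u' u = u := hu'eq u (le_trans h0 h1) h2
    show K' (u' u) (τ' u τ) = K' u τ
    rw [show τ' u τ = max (min τ (u' u)) 0 from rfl, huu, min_eq_left h1, max_eq_left h0]
  set Kd : ℝ → ℝ := fun τ => K (u' τ) (u' τ) with hKddef
  have hKdc : Continuous Kd := by
    apply hK.comp_continuous (hu'c.prodMk hu'c)
    intro τ; exact ⟨(hu'mem τ).1, le_rfl, (hu'mem τ).2⟩
  have hKdeq : ∀ τ, 0 ≤ τ → τ ≤ T → Kd τ = K τ τ := by
    intro τ h0 h1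
    show K (u' τ) (u' τ) = K τ τ
    rw [hu'eq τ h0 h1]
  set Kt : ℝ → ℝ → ℝ :=
    fun u τ => Kd τ + ((∫ r in (0:ℝ)..u, Kt' r τ) - ∫ r in (0:ℝ)..τ, Kt' r τ) with hKtdef
  have hKt'slice : ∀ τ : ℝ, Continuous fun r => Kt' r τ :=
    fun τ => hKt'c.comp (continuous_id.prodMk continuous_const)
  have hKtc : Continuous fun p : ℝ × ℝ => Kt p.1 p.2 := by
    apply Continuous.add (hKdc.comp continuous_snd)
    apply Continuous.sub
    · exact intervalIntegral.continuous_parametric_intervalIntegral_of_continuous (a₀ := 0)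
        (f := fun (p : ℝ × ℝ) r => Kt' r p.2)
        (hKt'c.comp (continuous_snd.prodMk (continuous_snd.comp continuous_fst)))
        continuous_fst
    · exact intervalIntegral.continuous_parametric_intervalIntegral_of_continuous (a₀ := 0)
        (f := fun (p : ℝ × ℝ) r => Kt' r p.2)
        (hKt'c.comp (continuous_snd.prodMk (continuous_snd.comp continuous_fst)))
        continuous_snd
  have hKtd : ∀ s τ : ℝ, HasDerivAt (fun u => Kt u τ) (Kt' s τ) s := by
    intro s τ
    have h1 : HasDerivAt (fun u => ∫ r in (0:ℝ)..u, Kt' r τ) (Kt' s τ) s :=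
      intervalIntegral.integral_hasDerivAt_right ((hKt'slice τ).intervalIntegrable _ _)
        (hKt'slice τ).stronglyMeasurable.stronglyMeasurableAtFilter (hKt'slice τ).continuousAt
    exact (h1.sub_const _).const_add (Kd τ)
  have hKteq : ∀ u τ : ℝ, 0 ≤ τ → τ ≤ u → u ≤ T → Kt u τ = K u τ := by
    intro u τ h0 h1 h2
    have e1 : (∫ r in (0:ℝ)..u, Kt' r τ) - (∫ r in (0:ℝ)..τ, Kt' r τ)
        = ∫ r in τ..u, Kt' r τ :=
      intervalIntegral.integral_interval_sub_left
        ((hKt'slice τ).intervalIntegrable _ _) ((hKt'slice τ).intervalIntegrable _ _)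
    have e2 : (∫ r in τ..u, Kt' r τ) = ∫ r in τ..u, K' r τ := by
      apply intervalIntegral.integral_congr
      intro r hr
      rw [Set.uIcc_of_le h1] at hr
      exact hKt'eq r τ h0 hr.1 (le_trans hr.2 h2)
    have e3 : (∫ r in τ..u, K' r τ) = K u τ - K τ τ := by
      apply intervalIntegral.integral_eq_sub_of_hasDerivAt
      · intro r hr
        rw [Set.uIcc_of_le h1] at hr
        exact hderiv r τ h0 hr.1 (le_trans hr.2 h2)
      · apply ContinuousOn.intervalIntegrable
        apply hK'.comp ((continuous_id.prodMk continuous_const).continuousOn)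
        intro r hr
        rw [Set.uIcc_of_le h1] at hr
        exact ⟨h0, hr.1, le_trans hr.2 h2⟩
    show Kd τ + ((∫ r in (0:ℝ)..u, Kt' r τ) - ∫ r in (0:ℝ)..τ, Kt' r τ) = K u τ
    rw [e1, e2, e3, hKdeq τ h0 (le_trans h1 h2)]
    ring
  have main := caputo_leibniz_smooth α hα1 Kt Kt' hKtc hKt'c hKtd t ht.1
  have hne : ∀ᵐ s : ℝ, s ≠ t := by
    rw [MeasureTheory.ae_iff]
    simp only [ne_eq, not_not, Set.setOf_eq_eq_singleton]
    exact Real.volume_singleton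
  have congr1 : (∫ s in (0:ℝ)..t, (t - s) ^ (-α) *
        deriv (fun s' => ∫ τ in (0:ℝ)..s', K s' τ) s)
      = ∫ s in (0:ℝ)..t, (t - s) ^ (-α) *
        deriv (fun s' => ∫ τ in (0:ℝ)..s', Kt s' τ) s := by
    apply intervalIntegral.integral_congr_ae
    filter_upwards [hne] with s hsne hsI
    rw [Set.uIoc_of_le ht.1.le] at hsI
    have hsT : s < T := lt_of_lt_of_le (lt_of_le_of_ne hsI.2 hsne) ht.2
    congr 1
    apply Filter.EventuallyEq.deriv_eq
    filter_upwards [Ioo_mem_nhds hsI.1 hsT] with s' hs'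
    apply intervalIntegral.integral_congr
    intro τ hτ
    rw [Set.uIcc_of_le hs'.1.le] at hτ
    exact (hKteq s' τ hτ.1 hτ.2 hs'.2.le).symm
  have congr2 : (∫ τ in (0:ℝ)..t, ∫ s in τ..t, (t - s) ^ (-α) * Kt' s τ)
      = ∫ τ in (0:ℝ)..t, ∫ s in τ..t, (t - s) ^ (-α) * K' s τ := by
    apply intervalIntegral.integral_congr
    intro τ hτ
    rw [Set.uIcc_of_le ht.1.le] at hτ
    apply intervalIntegral.integral_congr
    intro s hs
    rw [Set.uIcc_of_le hτ.2] at hs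
    show (t - s) ^ (-α) * Kt' s τ = (t - s) ^ (-α) * K' s τ
    rw [hKt'eq s τ hτ.1 hs.1 (le_trans hs.2 ht.2)]
  have congr3 : (∫ s in (0:ℝ)..t, (t - s) ^ (-α) * Kt s s)
      = ∫ s in (0:ℝ)..t, (t - s) ^ (-α) * K s s := by
    apply intervalIntegral.integral_congr
    intro s hs
    rw [Set.uIcc_of_le ht.1.le] at hs
    show (t - s) ^ (-α) * Kt s s = (t - s) ^ (-α) * K s s
    rw [hKteq s s hs.1 le_rfl (le_trans hs.2 ht.2)]
  rw [congr1, main, congr2, congr3, mul_add]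
  congr 1
  exact (intervalIntegral.integral_const_mul _ _).symm
end
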